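/- The infimum of the collision frequency is attained at v = u₁ and equals ν₀ = lim_{r→0⁺} σ(r) = (8/(2+μ)²)√(2πθ₁/m₁) > 0, where σ(r) = (2π/(2+μ)²)√(m₁/(2πθ₁))·[(4θ₁/m₁)exp(-(m₁/(2θ₁))r²) + (2r + 2θ₁/(m₁r))∫₀^{2r}exp(-(m₁/(8θ₁))t²)dt]. -/

import Mathlib

open MeasureTheory Real

noncomputable section

/-- Auxiliary: the Gaussian-type antiderivative. -/
noncomputable def Ffcoll (a y : ℝ) : ℝ := ∫ t in (0:ℝ)..y, Real.exp (-a * t ^ 2)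

/-- Auxiliary: the normalized collision-frequency profile. -/
noncomputable def hhcoll (a x : ℝ) : ℝ :=
  (1 / (2 * a)) * Real.exp (-(4 * a) * x ^ 2) + (2 * x + 1 / (4 * a * x)) * Ffcoll a (2 * x)

lemma Ffcoll_hasDerivAt (a x : ℝ) :
    HasDerivAt (Ffcoll a) (Real.exp (-a * x ^ 2)) x := by
  have hc : Continuous fun t : ℝ => Real.exp (-a * t ^ 2) := by continuity
  exact intervalIntegral.integral_hasDerivAt_right (hc.intervalIntegrable _ _)
    (hc.stronglyMeasurableAtFilter _ _) hc.continuousAt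

lemma Ffcoll_continuous (a : ℝ) : Continuous (Ffcoll a) := by
  rw [continuous_iff_continuousAt]
  exact fun x => (Ffcoll_hasDerivAt a x).continuousAt

lemma Ffcoll_zero (a : ℝ) : Ffcoll a 0 = 0 := intervalIntegral.integral_same

lemma Ffcoll_nonneg (a x : ℝ) (hx : 0 ≤ x) : 0 ≤ Ffcoll a x :=
  intervalIntegral.integral_nonneg hx (fun t _ => (Real.exp_pos _).le)

lemma Ffcoll_le (a x : ℝ) (ha : 0 ≤ a) (hx : 0 ≤ x) : Ffcoll a x ≤ x := by
  have h : Ffcoll a x ≤ ∫ t in (0:ℝ)..x, (1:ℝ) := by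
    apply intervalIntegral.integral_mono_on hx
    · exact (by continuity : Continuous fun t : ℝ => Real.exp (-a * t ^ 2)).intervalIntegrable _ _
    · exact intervalIntegrable_const
    · intro t ht
      rw [Real.exp_le_one_iff]
      nlinarith [sq_nonneg t]
  simpa using h

lemma hhcoll_hasDerivAt (a x : ℝ) (ha : a ≠ 0) (hx : x ≠ 0) :
    HasDerivAt (hhcoll a)
      (1 / (2 * a * x) * Real.exp (-(4 * a) * x ^ 2)
        + (2 - 1 / (4 * a * x ^ 2)) * Ffcoll a (2 * x)) x := by
  have hE : HasDerivAt (fun y : ℝ => Real.exp (-(4 * a) * y ^ 2))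
      (Real.exp (-(4 * a) * x ^ 2) * (-(4 * a) * (2 * x))) x := by
    have hinner : HasDerivAt (fun y : ℝ => -(4 * a) * y ^ 2) (-(4 * a) * (2 * x)) x := by
      simpa using (hasDerivAt_pow 2 x).const_mul (-(4 * a))
    exact hinner.exp
  have hF : HasDerivAt (fun y : ℝ => Ffcoll a (2 * y))
      (Real.exp (-(4 * a) * x ^ 2) * 2) x := by
    have h2 : HasDerivAt (fun y : ℝ => 2 * y) 2 x := by
      simpa using (hasDerivAt_id x).const_mul 2
    have := (Ffcoll_hasDerivAt a (2 * x)).comp x h2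
    have heq : -a * (2 * x) ^ 2 = -(4 * a) * x ^ 2 := by ring
    rw [heq] at this
    exact this
  have hI : HasDerivAt (fun y : ℝ => 2 * y + 1 / (4 * a * y))
      (2 + -(4 * a) / (4 * a * x) ^ 2) x := by
    have h1 : HasDerivAt (fun y : ℝ => 2 * y) 2 x := by
      simpa using (hasDerivAt_id x).const_mul 2
    have h2 : HasDerivAt (fun y : ℝ => 4 * a * y) (4 * a) x := by
      simpa using (hasDerivAt_id x).const_mul (4 * a)
    have h3 := h2.inv (by simp [ha, hx])
    exact (h1.add h3).congr_of_eventuallyEq (Filter.Eventually.of_forall fun y => by simp only [one_div, Pi.add_apply, Pi.inv_apply])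
  have total := (hE.const_mul (1 / (2 * a))).add (hI.mul hF)
  refine total.congr_deriv ?_
  field_simp
  ring

lemma hhcoll_deriv_pos (a x : ℝ) (ha : 0 < a) (hx : 0 < x) :
    0 < 1 / (2 * a * x) * Real.exp (-(4 * a) * x ^ 2)
        + (2 - 1 / (4 * a * x ^ 2)) * Ffcoll a (2 * x) := by
  set E := Real.exp (-(4 * a) * x ^ 2) with hEdef
  have hEpos : 0 < E := Real.exp_pos _
  have hF0 : 0 ≤ Ffcoll a (2 * x) := Ffcoll_nonneg a _ (by linarith)
  have hFle : Ffcoll a (2 * x) ≤ 2 * x := Ffcoll_le a _ ha.le (by linarith)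
  have hElb : 1 - 4 * a * x ^ 2 < E := by
    have h := Real.add_one_lt_exp (x := -(4 * a) * x ^ 2) (by nlinarith [pow_pos hx 2, mul_pos ha (pow_pos hx 2)])
    rw [← hEdef] at h
    linarith
  have key : 0 < 2 * x * E + (8 * a * x ^ 2 - 1) * Ffcoll a (2 * x) := by
    rcases le_or_gt 1 (8 * a * x ^ 2) with h | h
    · nlinarith
    · nlinarith [mul_le_mul_of_nonneg_left hFle (by linarith : (0:ℝ) ≤ 1 - 8 * a * x ^ 2),
        mul_lt_mul_of_pos_left hElb (by linarith : (0:ℝ) < 2 * x),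
        mul_pos (mul_pos ha (pow_pos hx 2)) hx]
  have h4 : 0 < 4 * a * x ^ 2 := by positivity
  have heq : 1 / (2 * a * x) * E + (2 - 1 / (4 * a * x ^ 2)) * Ffcoll a (2 * x)
      = (2 * x * E + (8 * a * x ^ 2 - 1) * Ffcoll a (2 * x)) / (4 * a * x ^ 2) := by
    field_simp
    ring
  rw [heq]
  exact div_pos key h4

lemma hhcoll_tendsto (a : ℝ) (ha : 0 < a) :
    Filter.Tendsto (hhcoll a) (nhdsWithin 0 (Set.Ioi 0)) (nhds (1 / a)) := by
  have T1 : Filter.Tendsto (fun x : ℝ => (1 / (2 * a)) * Real.exp (-(4 * a) * x ^ 2))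
      (nhdsWithin 0 (Set.Ioi 0)) (nhds (1 / (2 * a))) := by
    have hc : Continuous fun x : ℝ => (1 / (2 * a)) * Real.exp (-(4 * a) * x ^ 2) := by
      continuity
    have := (hc.tendsto 0).mono_left (nhdsWithin_le_nhds (s := Set.Ioi (0:ℝ)))
    simpa using this
  have T2 : Filter.Tendsto (fun x : ℝ => 2 * x * Ffcoll a (2 * x))
      (nhdsWithin 0 (Set.Ioi 0)) (nhds 0) := by
    have hc : Continuous fun x : ℝ => 2 * x * Ffcoll a (2 * x) :=
      (continuous_const.mul continuous_id).mul
        ((Ffcoll_continuous a).comp (continuous_const.mul continuous_id))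
    have := (hc.tendsto 0).mono_left (nhdsWithin_le_nhds (s := Set.Ioi (0:ℝ)))
    simpa [Ffcoll_zero] using this
  have hslope : Filter.Tendsto (fun y : ℝ => Ffcoll a y / y) (nhdsWithin 0 {(0:ℝ)}ᶜ)
      (nhds 1) := by
    have h := hasDerivAt_iff_tendsto_slope.mp (Ffcoll_hasDerivAt a 0)
    have heq : slope (Ffcoll a) 0 = fun y : ℝ => Ffcoll a y / y := by
      funext y
      simp [slope, Ffcoll_zero, div_eq_inv_mul]
    rw [heq] at h
    simpa using h
  have hdouble : Filter.Tendsto (fun x : ℝ => 2 * x) (nhdsWithin 0 (Set.Ioi 0))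
      (nhdsWithin 0 {(0:ℝ)}ᶜ) := by
    apply tendsto_nhdsWithin_of_tendsto_nhds_of_eventually_within
    · have h0 : Filter.Tendsto (fun x : ℝ => 2 * x) (nhdsWithin (0:ℝ) (Set.Ioi 0))
          (nhds (2 * 0)) :=
        ((continuous_const.mul continuous_id).tendsto 0).mono_left nhdsWithin_le_nhds
      simpa using h0
    · filter_upwards [self_mem_nhdsWithin] with x hx
      simp only [Set.mem_compl_iff, Set.mem_singleton_iff]
      have : (0:ℝ) < x := hx
      positivity
  have T3' : Filter.Tendsto (fun x : ℝ => Ffcoll a (2 * x) / (2 * x))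
      (nhdsWithin 0 (Set.Ioi 0)) (nhds 1) := hslope.comp hdouble
  have T3 : Filter.Tendsto (fun x : ℝ => (1 / (4 * a * x)) * Ffcoll a (2 * x))
      (nhdsWithin 0 (Set.Ioi 0)) (nhds (1 / (2 * a))) := by
    have h := T3'.const_mul (1 / (2 * a))
    have h2 : (1 / (2 * a)) * 1 = 1 / (2 * a) := by ring
    rw [h2] at h
    apply h.congr'
    filter_upwards [self_mem_nhdsWithin] with x hx
    have hx' : (0:ℝ) < x := hx
    field_simp
    try ring
    try tauto
  have total := T1.add (T2.add T3)
  have hval : 1 / (2 * a) + (0 + 1 / (2 * a)) = 1 / a := by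
    field_simp
    try ring
    try tauto
  rw [hval] at total
  apply total.congr
  intro x
  unfold hhcoll
  ring

lemma hhcoll_ge (a : ℝ) (ha : 0 < a) (r : ℝ) (hr : 0 < r) : 1 / a ≤ hhcoll a r := by
  have hmono : StrictMonoOn (hhcoll a) (Set.Ioi 0) := by
    apply strictMonoOn_of_deriv_pos (convex_Ioi 0)
    · intro x hx
      exact (hhcoll_hasDerivAt a x ha.ne' (ne_of_gt hx)).continuousAt.continuousWithinAt
    · intro x hx
      rw [interior_Ioi] at hx
      rw [(hhcoll_hasDerivAt a x ha.ne' (ne_of_gt hx)).deriv]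
      exact hhcoll_deriv_pos a x ha hx
  refine le_of_tendsto (hhcoll_tendsto a ha) ?_
  filter_upwards [Ioc_mem_nhdsGT_of_mem (Set.left_mem_Ico.mpr hr)] with s hs
  exact hmono.monotoneOn hs.1 hr hs.2
theorem collision_frequency_infimum
    (m₁ θ₁ μ : ℝ) (hm₁ : 0 < m₁) (hθ₁ : 0 < θ₁) (hμ : 0 < μ)
    (σ : ℝ → ℝ)
    (hσ : ∀ r : ℝ, 0 < r →
      σ r = (2 * Real.pi / (2 + μ) ^ 2) * Real.sqrt (m₁ / (2 * Real.pi * θ₁)) *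
        ((4 * θ₁ / m₁) * Real.exp (-(m₁ / (2 * θ₁)) * r ^ 2)
          + (2 * r + 2 * θ₁ / (m₁ * r)) *
            ∫ t in (0 : ℝ)..(2 * r), Real.exp (-(m₁ / (8 * θ₁)) * t ^ 2))) :
    Filter.Tendsto σ (nhdsWithin 0 (Set.Ioi 0))
        (nhds ((8 / (2 + μ) ^ 2) * Real.sqrt (2 * Real.pi * θ₁ / m₁)))
      ∧ (0 < (8 / (2 + μ) ^ 2) * Real.sqrt (2 * Real.pi * θ₁ / m₁))
      ∧ ∀ r : ℝ, 0 < r →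
          (8 / (2 + μ) ^ 2) * Real.sqrt (2 * Real.pi * θ₁ / m₁) ≤ σ r := by
  have hπ := Real.pi_pos
  set a : ℝ := m₁ / (8 * θ₁) with ha_def
  have ha : 0 < a := by positivity
  set c : ℝ := 2 * Real.pi / (2 + μ) ^ 2 * Real.sqrt (m₁ / (2 * Real.pi * θ₁)) with hc_def
  have hsq : 0 < Real.sqrt (m₁ / (2 * Real.pi * θ₁)) := Real.sqrt_pos.mpr (by positivity)
  have hc : 0 < c := by rw [hc_def]; positivity
  have hp : (0:ℝ) < 2 * Real.pi * θ₁ / m₁ := by positivity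
  have hs : 0 < Real.sqrt (2 * Real.pi * θ₁ / m₁) := Real.sqrt_pos.mpr hp
  have hs2 : Real.sqrt (2 * Real.pi * θ₁ / m₁) * Real.sqrt (2 * Real.pi * θ₁ / m₁)
      = 2 * Real.pi * θ₁ / m₁ := Real.mul_self_sqrt hp.le
  have hinv : Real.sqrt (m₁ / (2 * Real.pi * θ₁)) = (Real.sqrt (2 * Real.pi * θ₁ / m₁))⁻¹ := by
    rw [← Real.sqrt_inv]
    congr 1
    rw [inv_div]
  have hL : (8 / (2 + μ) ^ 2) * Real.sqrt (2 * Real.pi * θ₁ / m₁) = c * (1 / a) := by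
    rw [hc_def, hinv, ha_def]
    have h1a : (1:ℝ) / (m₁ / (8 * θ₁)) = 8 * θ₁ / m₁ := by field_simp
    rw [h1a, show 2 * Real.pi / (2 + μ) ^ 2 * (Real.sqrt (2 * Real.pi * θ₁ / m₁))⁻¹
          * (8 * θ₁ / m₁)
        = (8 / (2 + μ) ^ 2) * ((Real.sqrt (2 * Real.pi * θ₁ / m₁))⁻¹ * (2 * Real.pi * θ₁ / m₁))
      from by ring]
    have hkey : (Real.sqrt (2 * Real.pi * θ₁ / m₁))⁻¹ * (2 * Real.pi * θ₁ / m₁)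
        = Real.sqrt (2 * Real.pi * θ₁ / m₁) := by
      rw [inv_mul_eq_iff_eq_mul₀ hs.ne']
      exact hs2.symm
    rw [hkey]
  have hσ' : ∀ r : ℝ, 0 < r → σ r = c * hhcoll a r := by
    intro r hr
    rw [hσ r hr]
    unfold hhcoll Ffcoll
    have e1 : 4 * θ₁ / m₁ = 1 / (2 * a) := by rw [ha_def]; field_simp; ring
    have e2 : m₁ / (2 * θ₁) = 4 * a := by rw [ha_def]; field_simp; ring
    have e3 : 2 * θ₁ / (m₁ * r) = 1 / (4 * a * r) := by rw [ha_def]; field_simp; ring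
    rw [e1, e2, e3]
  refine ⟨?_, ?_, ?_⟩
  · have h1 := (hhcoll_tendsto a ha).const_mul c
    rw [hL]
    apply h1.congr'
    filter_upwards [self_mem_nhdsWithin] with r hr
    exact (hσ' r hr).symm
  · positivity
  · intro r hr
    rw [hL, hσ' r hr]
    exact mul_le_mul_of_nonneg_left (hhcoll_ge a ha r hr) hc.le
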